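/- The function u(x,t) = (1 - 8k² - c²) + 12k²·tanh²(k(x - ct)) satisfies the Boussinesq equation ∂²u/∂t² + u·∂²u/∂x² - ∂²u/∂x² + (∂u/∂x)² - ∂⁴u/∂x⁴ = 0 for all real x and t, for any real constants k and c. -/

import Mathlib

lemma tanh_hasDerivAt (z : ℝ) : HasDerivAt Real.tanh (1 - Real.tanh z ^ 2) z := by
  have hc : Real.cosh z ≠ 0 := ne_of_gt (Real.cosh_pos z)
  have h := (Real.hasDerivAt_sinh z).div (Real.hasDerivAt_cosh z) hc
  have e : (Real.sinh / Real.cosh) = Real.tanh := by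
    funext w; rw [Real.tanh_eq_sinh_div_cosh, Pi.div_apply]
  rw [e] at h
  refine h.congr_deriv ?_
  have h2 := Real.cosh_sq_sub_sinh_sq z
  rw [Real.tanh_eq_sinh_div_cosh]
  field_simp

lemma tanh_comp {f : ℝ → ℝ} {f' y : ℝ} (hf : HasDerivAt f f' y) :
    HasDerivAt (fun y => Real.tanh (f y)) ((1 - Real.tanh (f y) ^ 2) * f') y :=
  (tanh_hasDerivAt (f y)).comp y hf

theorem boussinesq_traveling_wave (k c : ℝ) (u : ℝ → ℝ → ℝ)
    (hu : ∀ x t, u x t = (1 - 8 * k ^ 2 - c ^ 2)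
        + 12 * k ^ 2 * (Real.tanh (k * (x - c * t))) ^ 2) :
    ∀ x t : ℝ,
      deriv (deriv (fun t' => u x t')) t
        + u x t * deriv (deriv (fun x' => u x' t)) x
        - deriv (deriv (fun x' => u x' t)) x
        + (deriv (fun x' => u x' t) x) ^ 2
        - deriv^[4] (fun x' => u x' t) x = 0 := by
  intro x t
  -- inner derivatives
  have hTx : ∀ y : ℝ, HasDerivAt (fun y => Real.tanh (k * (y - c * t)))
      ((1 - Real.tanh (k * (y - c * t)) ^ 2) * k) y := by
    intro y
    have hin : HasDerivAt (fun y : ℝ => k * (y - c * t)) k y := by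
      simpa using ((hasDerivAt_id y).sub_const (c * t)).const_mul k
    exact tanh_comp hin
  have hTt : ∀ s : ℝ, HasDerivAt (fun s => Real.tanh (k * (x - c * s)))
      ((1 - Real.tanh (k * (x - c * s)) ^ 2) * (k * (-c))) s := by
    intro s
    have hin : HasDerivAt (fun s : ℝ => k * (x - c * s)) (k * (-c)) s := by
      have h1 : HasDerivAt (fun s : ℝ => c * s) c s := by
        simpa using (hasDerivAt_id s).const_mul c
      simpa using (h1.const_sub x).const_mul k
    exact tanh_comp hin
  -- x-direction chain
  have hx0 : ∀ y : ℝ, HasDerivAt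
      (fun y => (1 - 8 * k ^ 2 - c ^ 2) + 12 * k ^ 2 * Real.tanh (k * (y - c * t)) ^ 2)
      (24 * k ^ 3 * Real.tanh (k * (y - c * t))
        - 24 * k ^ 3 * Real.tanh (k * (y - c * t)) ^ 3) y := by
    intro y
    have h := (((hTx y).pow 2).const_mul (12 * k ^ 2)).const_add (1 - 8 * k ^ 2 - c ^ 2)
    refine h.congr_deriv ?_
    ring
  have hx1 : ∀ y : ℝ, HasDerivAt
      (fun y => 24 * k ^ 3 * Real.tanh (k * (y - c * t))
        - 24 * k ^ 3 * Real.tanh (k * (y - c * t)) ^ 3)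
      (24 * k ^ 4 - 96 * k ^ 4 * Real.tanh (k * (y - c * t)) ^ 2
        + 72 * k ^ 4 * Real.tanh (k * (y - c * t)) ^ 4) y := by
    intro y
    have h := ((hTx y).const_mul (24 * k ^ 3)).sub (((hTx y).pow 3).const_mul (24 * k ^ 3))
    refine h.congr_deriv ?_
    ring
  have hx2 : ∀ y : ℝ, HasDerivAt
      (fun y => 24 * k ^ 4 - 96 * k ^ 4 * Real.tanh (k * (y - c * t)) ^ 2
        + 72 * k ^ 4 * Real.tanh (k * (y - c * t)) ^ 4)
      (-(192 * k ^ 5) * Real.tanh (k * (y - c * t))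
        + 480 * k ^ 5 * Real.tanh (k * (y - c * t)) ^ 3
        - 288 * k ^ 5 * Real.tanh (k * (y - c * t)) ^ 5) y := by
    intro y
    have h := ((hasDerivAt_const y (24 * k ^ 4)).sub
      (((hTx y).pow 2).const_mul (96 * k ^ 4))).add
      (((hTx y).pow 4).const_mul (72 * k ^ 4))
    refine h.congr_deriv ?_
    ring
  have hx3 : ∀ y : ℝ, HasDerivAt
      (fun y => -(192 * k ^ 5) * Real.tanh (k * (y - c * t))
        + 480 * k ^ 5 * Real.tanh (k * (y - c * t)) ^ 3
        - 288 * k ^ 5 * Real.tanh (k * (y - c * t)) ^ 5)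
      (-(192 * k ^ 6) + 1632 * k ^ 6 * Real.tanh (k * (y - c * t)) ^ 2
        - 2880 * k ^ 6 * Real.tanh (k * (y - c * t)) ^ 4
        + 1440 * k ^ 6 * Real.tanh (k * (y - c * t)) ^ 6) y := by
    intro y
    have h := (((hTx y).const_mul (-(192 * k ^ 5))).add
      (((hTx y).pow 3).const_mul (480 * k ^ 5))).sub
      (((hTx y).pow 5).const_mul (288 * k ^ 5))
    refine h.congr_deriv ?_
    ring
  -- t-direction chain
  have ht0 : ∀ s : ℝ, HasDerivAt
      (fun s => (1 - 8 * k ^ 2 - c ^ 2) + 12 * k ^ 2 * Real.tanh (k * (x - c * s)) ^ 2)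
      (-(24 * k ^ 3 * c) * Real.tanh (k * (x - c * s))
        + 24 * k ^ 3 * c * Real.tanh (k * (x - c * s)) ^ 3) s := by
    intro s
    have h := (((hTt s).pow 2).const_mul (12 * k ^ 2)).const_add (1 - 8 * k ^ 2 - c ^ 2)
    refine h.congr_deriv ?_
    ring
  have ht1 : ∀ s : ℝ, HasDerivAt
      (fun s => -(24 * k ^ 3 * c) * Real.tanh (k * (x - c * s))
        + 24 * k ^ 3 * c * Real.tanh (k * (x - c * s)) ^ 3)
      (24 * k ^ 4 * c ^ 2 - 96 * k ^ 4 * c ^ 2 * Real.tanh (k * (x - c * s)) ^ 2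
        + 72 * k ^ 4 * c ^ 2 * Real.tanh (k * (x - c * s)) ^ 4) s := by
    intro s
    have h := ((hTt s).const_mul (-(24 * k ^ 3 * c))).add
      (((hTt s).pow 3).const_mul (24 * k ^ 3 * c))
    refine h.congr_deriv ?_
    ring
  -- rewrite the goal
  have hxfun : (fun x' => u x' t)
      = fun x' => (1 - 8 * k ^ 2 - c ^ 2) + 12 * k ^ 2 * Real.tanh (k * (x' - c * t)) ^ 2 :=
    funext fun x' => hu x' t
  have htfun : (fun t' => u x t')
      = fun t' => (1 - 8 * k ^ 2 - c ^ 2) + 12 * k ^ 2 * Real.tanh (k * (x - c * t')) ^ 2 :=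
    funext fun t' => hu x t'
  have hd0 : deriv (fun x' => (1 - 8 * k ^ 2 - c ^ 2)
        + 12 * k ^ 2 * Real.tanh (k * (x' - c * t)) ^ 2)
      = fun y => 24 * k ^ 3 * Real.tanh (k * (y - c * t))
        - 24 * k ^ 3 * Real.tanh (k * (y - c * t)) ^ 3 :=
    funext fun y => (hx0 y).deriv
  have hd1 : deriv (fun y => 24 * k ^ 3 * Real.tanh (k * (y - c * t))
        - 24 * k ^ 3 * Real.tanh (k * (y - c * t)) ^ 3)
      = fun y => 24 * k ^ 4 - 96 * k ^ 4 * Real.tanh (k * (y - c * t)) ^ 2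
        + 72 * k ^ 4 * Real.tanh (k * (y - c * t)) ^ 4 :=
    funext fun y => (hx1 y).deriv
  have hd2 : deriv (fun y => 24 * k ^ 4 - 96 * k ^ 4 * Real.tanh (k * (y - c * t)) ^ 2
        + 72 * k ^ 4 * Real.tanh (k * (y - c * t)) ^ 4)
      = fun y => -(192 * k ^ 5) * Real.tanh (k * (y - c * t))
        + 480 * k ^ 5 * Real.tanh (k * (y - c * t)) ^ 3
        - 288 * k ^ 5 * Real.tanh (k * (y - c * t)) ^ 5 :=
    funext fun y => (hx2 y).deriv
  have he0 : deriv (fun t' => (1 - 8 * k ^ 2 - c ^ 2)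
        + 12 * k ^ 2 * Real.tanh (k * (x - c * t')) ^ 2)
      = fun s => -(24 * k ^ 3 * c) * Real.tanh (k * (x - c * s))
        + 24 * k ^ 3 * c * Real.tanh (k * (x - c * s)) ^ 3 :=
    funext fun s => (ht0 s).deriv
  have hit : deriv^[4] (fun x' => u x' t)
      = deriv (deriv (deriv (deriv (fun x' => u x' t)))) := by
    simp [Function.iterate_succ, Function.comp]
  rw [hit, hxfun, htfun, hd0, hd1, hd2, he0, (ht1 t).deriv, (hx3 x).deriv, hu]
  simp only []
  ring
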